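/- Let k ≥ 1 and n ≥ 1, and let a_0, a_1 be elements of a commutative ring with unity. Then per((a_0·I_n + a_1·P_n) ⊗ J_k) = (k!)^n · Σ_{l=0}^{k} C(k,l)^n · (a_0^{k−l} a_1^{l})^n. -/

import Mathlib

open scoped BigOperators
open Kronecker

/-- The permanent of a rectangular matrix: the sum over all injections of the
row index set into the column index set of the corresponding products. -/
noncomputable def rectPer {R : Type*} [CommRing R] {ι κ : Type*} [Fintype ι] [Fintype κ]
    [DecidableEq ι] [DecidableEq κ] (A : Matrix ι κ R) : R :=
  ∑ σ : ι ↪ κ, ∏ i, A i (σ i)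

/-- The `n × n` circulant `(0,1)` matrix `P_n`, with `(i,j)` entry `1` iff `j − i ≡ 1 (mod n)`. -/
def Pcirc (R : Type*) [CommRing R] (n : ℕ) [NeZero n] : Matrix (Fin n) (Fin n) R :=
  Matrix.of fun i j => if j = i + 1 then 1 else 0


private lemma hcongr {ρ : Type*} {n k : ℕ} {g : ρ → Fin n}
    (h : ∀ j, {r // g r = j} ↪ Fin k) {j j' : Fin n} (e : j = j') (x : {r // g r = j}) :
    h j x = h j' ⟨x.1, x.2.trans e⟩ := by subst e; simp

private def fiberEquiv {ρ : Type*} [Fintype ρ] [DecidableEq ρ] {n k : ℕ} (g : ρ → Fin n) :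
    {σ : ρ ↪ (Fin n × Fin k) // ∀ r, (σ r).1 = g r} ≃ (∀ j, {r // g r = j} ↪ Fin k) where
  toFun σ j := ⟨fun r => (σ.1 r.1).2, by
    intro r r' hh
    apply Subtype.ext
    apply σ.1.injective
    apply Prod.ext
    · rw [σ.2, σ.2, r.2, r'.2]
    · exact hh⟩
  invFun h := ⟨⟨fun r => (g r, h (g r) ⟨r, rfl⟩), by
    intro r r' hrr
    have h1 : g r = g r' := congrArg Prod.fst hrr
    have h2 : h (g r) ⟨r, rfl⟩ = h (g r') ⟨r', rfl⟩ := congrArg Prod.snd hrr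
    rw [hcongr h h1 ⟨r, rfl⟩] at h2
    have := (h (g r')).injective h2
    exact congrArg Subtype.val this⟩, fun r => rfl⟩
  left_inv σ := by
    apply Subtype.ext
    apply Function.Embedding.ext
    intro r
    exact Prod.ext (σ.2 r).symm rfl
  right_inv h := by
    funext j
    apply Function.Embedding.ext
    intro r
    show h (g r.1) ⟨r.1, rfl⟩ = h j r
    rw [hcongr h r.2 ⟨r.1, rfl⟩]

private lemma card_emb_fiber {ρ : Type*} [Fintype ρ] [DecidableEq ρ] {n k : ℕ}
    (g : ρ → Fin n) :
    Fintype.card {σ : ρ ↪ (Fin n × Fin k) // ∀ r, (σ r).1 = g r} =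
      ∏ j : Fin n, Nat.descFactorial k (Fintype.card {r // g r = j}) := by
  rw [Fintype.card_congr (fiberEquiv g), Fintype.card_pi]
  refine Finset.prod_congr rfl fun j _ => ?_
  rw [Fintype.card_embedding_eq, Fintype.card_fin]


open Fin.NatCast in
private lemma cyc_const {n : ℕ} [NeZero n] (m : Fin n → ℕ) (h : ∀ j, m j ≤ m (j - 1)) :
    ∀ j, m j = m 0 := by
  have hanti : Antitone (fun i : ℕ => m (i : Fin n)) := by
    apply antitone_nat_of_succ_le
    intro i
    have := h ((i : ℕ) + 1 : ℕ)
    rwa [show (((i : ℕ) + 1 : ℕ) : Fin n) - 1 = (i : Fin n) by push_cast; simp] at this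
  intro j
  have h1 : m ((j.val : ℕ) : Fin n) ≤ m ((0 : ℕ) : Fin n) := hanti (Nat.zero_le _)
  have h2 : m ((n : ℕ) : Fin n) ≤ m ((j.val : ℕ) : Fin n) := hanti (le_of_lt j.isLt)
  have hn : ((n : ℕ) : Fin n) = ((0 : ℕ) : Fin n) := by simp
  rw [hn] at h2
  have : m ((j.val : ℕ) : Fin n) = m ((0 : ℕ) : Fin n) := le_antisymm h1 h2
  simpa [Fin.cast_val_eq_self] using this


private def mfun (n k : ℕ) (c : Fin n × Fin k → Bool) (i : Fin n) : ℕ :=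
  (Finset.univ.filter fun t : Fin k => c (i, t) = true).card

private lemma mfun_le (n k : ℕ) (c : Fin n × Fin k → Bool) (i : Fin n) : mfun n k c i ≤ k := by
  simpa [mfun] using (Finset.card_filter_le Finset.univ fun t : Fin k => c (i, t) = true)

private lemma card_block (k l : ℕ) :
    ((Finset.univ : Finset (Fin k → Bool)).filter
      fun d => (Finset.univ.filter fun t => d t = true).card = l).card = Nat.choose k l := by
  rw [show Nat.choose k l = ((Finset.univ : Finset (Fin k)).card).choose l by simp,
    ← Finset.card_powersetCard]
  apply Finset.card_nbij' (fun d => Finset.univ.filter fun t => d t = true)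
    (fun S t => decide (t ∈ S))
  · intro d hd
    simp only [Finset.mem_coe, Finset.mem_filter, Finset.mem_univ, true_and] at hd
    simp [Finset.mem_powersetCard, hd]
  · intro S hS
    simp only [Finset.mem_coe, Finset.mem_powersetCard] at hS
    simp [hS.2]
  · intro d _
    funext t
    simp
  · intro S _
    ext t
    simp

private lemma card_block_pow (n k l : ℕ) :
    ((Finset.univ : Finset (Fin n × Fin k → Bool)).filter
      fun c => ∀ j, mfun n k c j = l).card = (Nat.choose k l) ^ n := by
  have : ((Nat.choose k l) ^ n) =
      (Fintype.piFinset (fun _ : Fin n => (Finset.univ : Finset (Fin k → Bool)).filter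
        fun d => (Finset.univ.filter fun t => d t = true).card = l)).card := by
    rw [Fintype.card_piFinset]
    simp [card_block k l]
  rw [this]
  apply Finset.card_nbij' (fun c j t => c (j, t)) (fun x r => x r.1 r.2)
  · intro c hc
    simp only [Finset.mem_coe, Finset.mem_filter, Finset.mem_univ, true_and, mfun] at hc
    simp only [Finset.mem_coe, Fintype.mem_piFinset, Finset.mem_filter, Finset.mem_univ, true_and]
    exact (Finset.mem_filter.1 hc).2
  · intro x hx
    simp only [Finset.mem_coe, Fintype.mem_piFinset, Finset.mem_filter, Finset.mem_univ, true_and] at hx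
    simp only [Finset.mem_coe, Finset.mem_filter, Finset.mem_univ, true_and, mfun]
    exact Finset.mem_filter.2 ⟨Finset.mem_univ _, hx⟩
  · intro c _; rfl
  · intro x _; rfl

private lemma mfun_neg (n k : ℕ) (c : Fin n × Fin k → Bool) (i : Fin n) :
    (Finset.univ.filter fun t : Fin k => ¬ (c (i, t) = true)).card = k - mfun n k c i := by
  have h := Finset.card_filter_add_card_filter_not (s := (Finset.univ : Finset (Fin k)))
    (fun t => c (i, t) = true)
  simp only [Finset.card_univ, Fintype.card_fin] at h
  unfold mfun
  omega

private lemma fiber_card (n k : ℕ) [NeZero n] (c : Fin n × Fin k → Bool) (j : Fin n) :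
    Fintype.card {r : Fin n × Fin k // (if c r then r.1 else r.1 + 1) = j} =
      mfun n k c j + (k - mfun n k c (j - 1)) := by
  rw [Fintype.card_subtype, Finset.card_filter, Fintype.sum_prod_type]
  have step : ∀ i : Fin n, (∑ t : Fin k,
      if (if c (i, t) then i else i + 1) = j then 1 else 0) =
      (if i = j then mfun n k c i else 0) + (if i + 1 = j then k - mfun n k c i else 0) := by
    intro i
    have : ∀ t : Fin k, (if (if c (i, t) then i else i + 1) = j then (1:ℕ) else 0) =
        (if c (i, t) then (if i = j then 1 else 0) else (if i + 1 = j then 1 else 0)) := by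
      intro t
      by_cases h : c (i, t) <;> simp [h]
    simp_rw [this]
    rw [Finset.sum_ite (fun _ => if i = j then (1:ℕ) else 0) (fun _ => if i + 1 = j then 1 else 0)]
    rw [Finset.sum_const, Finset.sum_const, mfun_neg]
    by_cases h1 : i = j <;> by_cases h2 : i + 1 = j <;> simp [h1, h2, mfun]
  simp_rw [step]
  rw [Finset.sum_add_distrib, Finset.sum_ite_eq']
  simp_rw [show ∀ x : Fin n, (x + 1 = j) = (x = j - 1) from
    fun x => propext (eq_sub_iff_add_eq).symm]
  rw [Finset.sum_ite_eq']
  simp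

private lemma coeff_prod {R : Type*} [CommRing R] (n k : ℕ) (a0 a1 : R)
    (c : Fin n × Fin k → Bool) :
    (∏ r : Fin n × Fin k, if c r then a0 else a1) =
      ∏ i : Fin n, a0 ^ (mfun n k c i) * a1 ^ (k - mfun n k c i) := by
  rw [Fintype.prod_prod_type]
  refine Finset.prod_congr rfl fun i _ => ?_
  rw [Finset.prod_ite (fun _ => a0) (fun _ => a1), Finset.prod_const, Finset.prod_const,
    mfun_neg]
  rfl

theorem stmt0 {R : Type*} [CommRing R] (n k : ℕ) [NeZero n] (hk : 1 ≤ k) (a0 a1 : R) :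
    rectPer ((a0 • (1 : Matrix (Fin n) (Fin n) R) + a1 • Pcirc R n) ⊗ₖ
        (Matrix.of fun (_ : Fin k) (_ : Fin k) => (1 : R))) =
      (Nat.factorial k : R) ^ n * ∑ l ∈ Finset.range (k + 1),
        (Nat.choose k l : R) ^ n * (a0 ^ (k - l) * a1 ^ l) ^ n := by
  classical
  have hA : ∀ (r x : Fin n × Fin k),
      ((a0 • (1 : Matrix (Fin n) (Fin n) R) + a1 • Pcirc R n) ⊗ₖ
        (Matrix.of fun (_ : Fin k) (_ : Fin k) => (1 : R))) r x =
      ∑ b : Bool, (if b then a0 else a1) *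
        (if x.1 = (if b then r.1 else r.1 + 1) then (1 : R) else 0) := by
    intro r x
    rw [Fintype.sum_bool]
    simp only [if_true, if_false]
    rw [show ((a0 • (1 : Matrix (Fin n) (Fin n) R) + a1 • Pcirc R n) ⊗ₖ
        (Matrix.of fun (_ : Fin k) (_ : Fin k) => (1 : R))) r x =
        ((a0 • (1 : Matrix (Fin n) (Fin n) R) + a1 • Pcirc R n) r.1 x.1) * 1 from rfl]
    simp [Matrix.add_apply, Matrix.smul_apply, Matrix.one_apply, Pcirc, Matrix.of_apply,
      smul_eq_mul, mul_one, eq_comm]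
  rw [rectPer]
  have step1 : ∀ σ : (Fin n × Fin k) ↪ (Fin n × Fin k),
      (∏ r, ((a0 • (1 : Matrix (Fin n) (Fin n) R) + a1 • Pcirc R n) ⊗ₖ
        (Matrix.of fun (_ : Fin k) (_ : Fin k) => (1 : R))) r (σ r)) =
      ∑ c : Fin n × Fin k → Bool, (∏ r : Fin n × Fin k, if c r then a0 else a1) *
        (if (∀ r : Fin n × Fin k, (σ r).1 = (if c r then r.1 else r.1 + 1))
          then (1:R) else 0) := by
    intro σ
    simp_rw [hA]
    rw [Finset.prod_univ_sum (fun _ => (Finset.univ : Finset Bool))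
      (fun r b => (if b then a0 else a1) *
        if (σ r).1 = (if b then r.1 else r.1 + 1) then (1:R) else 0)]
    rw [Fintype.piFinset_univ]
    refine Finset.sum_congr rfl fun c _ => ?_
    rw [Finset.prod_mul_distrib]
    congr 1
    rw [Finset.prod_boole]
    simp
  simp_rw [step1]
  rw [Finset.sum_comm]
  have step2 : ∀ c : Fin n × Fin k → Bool,
      (∑ σ : (Fin n × Fin k) ↪ (Fin n × Fin k),
        (∏ r : Fin n × Fin k, if c r then a0 else a1) *
        (if (∀ r : Fin n × Fin k, (σ r).1 = (if c r then r.1 else r.1 + 1))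
          then (1:R) else 0)) =
      (∏ i : Fin n, a0 ^ (mfun n k c i) * a1 ^ (k - mfun n k c i)) *
        ∏ j : Fin n,
          ((Nat.descFactorial k (mfun n k c j + (k - mfun n k c (j - 1)))) : R) := by
    intro c
    rw [← Finset.mul_sum, Finset.sum_boole, coeff_prod]
    congr 1
    rw [show (Finset.univ.filter fun σ : (Fin n × Fin k) ↪ (Fin n × Fin k) =>
        ∀ r : Fin n × Fin k, (σ r).1 = (if c r then r.1 else r.1 + 1)).card =
        Fintype.card {σ : (Fin n × Fin k) ↪ (Fin n × Fin k) //
          ∀ r : Fin n × Fin k, (σ r).1 = (if c r then r.1 else r.1 + 1)} from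
      (Fintype.card_subtype _).symm]
    rw [card_emb_fiber (fun r : Fin n × Fin k => if c r then r.1 else r.1 + 1)]
    push_cast
    refine Finset.prod_congr rfl fun j _ => ?_
    exact_mod_cast congrArg (fun x : ℕ => ((Nat.descFactorial k x : ℕ) : R))
      (fiber_card n k c j)
  simp_rw [step2]
  have step3 : ∀ c : Fin n × Fin k → Bool,
      ((∏ i : Fin n, a0 ^ (mfun n k c i) * a1 ^ (k - mfun n k c i)) *
        ∏ j : Fin n,
          ((Nat.descFactorial k (mfun n k c j + (k - mfun n k c (j - 1)))) : R)) =
      ∑ l ∈ Finset.range (k + 1),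
        if (∀ j, mfun n k c j = l) then
          ((∏ i : Fin n, a0 ^ (mfun n k c i) * a1 ^ (k - mfun n k c i)) *
            ∏ j : Fin n,
              ((Nat.descFactorial k (mfun n k c j + (k - mfun n k c (j - 1)))) : R))
        else 0 := by
    intro c
    by_cases hc : ∀ j, mfun n k c j = mfun n k c 0
    · have hcond : ∀ l, (∀ j, mfun n k c j = l) ↔ (mfun n k c 0 = l) := by
        intro l
        constructor
        · intro h; exact h 0
        · intro h j; rw [hc j, h]
      simp_rw [hcond]
      rw [Finset.sum_ite_eq (Finset.range (k + 1)) (mfun n k c 0)]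
      rw [if_pos (Finset.mem_range.2 (Nat.lt_succ_of_le (mfun_le n k c 0)))]
    · have hex : ∃ j, ¬ (mfun n k c j ≤ mfun n k c (j - 1)) := by
        by_contra hco
        push_neg at hco
        exact hc (cyc_const _ hco)
      obtain ⟨j, hj⟩ := hex
      have h0 : (Nat.descFactorial k (mfun n k c j + (k - mfun n k c (j - 1)))) = 0 := by
        rw [Nat.descFactorial_eq_zero_iff_lt]
        have h1 := mfun_le n k c j
        have h2 := mfun_le n k c (j - 1)
        omega
      have hW : (∏ j : Fin n,
          ((Nat.descFactorial k (mfun n k c j + (k - mfun n k c (j - 1)))) : R)) = 0 :=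
        Finset.prod_eq_zero (Finset.mem_univ j) (by rw [h0]; norm_num)
      rw [hW, mul_zero]
      symm
      apply Finset.sum_eq_zero
      intro l _
      exact ite_self 0
  rw [Finset.sum_congr rfl fun c _ => step3 c]
  rw [Finset.sum_comm]
  have step4 : ∀ l ∈ Finset.range (k + 1),
      (∑ c : Fin n × Fin k → Bool,
        if (∀ j, mfun n k c j = l) then
          ((∏ i : Fin n, a0 ^ (mfun n k c i) * a1 ^ (k - mfun n k c i)) *
            ∏ j : Fin n,
              ((Nat.descFactorial k (mfun n k c j + (k - mfun n k c (j - 1)))) : R))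
        else 0) =
      ((Nat.choose k l : R)) ^ n * ((a0 ^ l * a1 ^ (k - l)) ^ n *
        ((Nat.factorial k : R)) ^ n) := by
    intro l hl
    have hlk : l ≤ k := Nat.lt_succ_iff.1 (Finset.mem_range.1 hl)
    rw [← Finset.sum_filter]
    have hval : ∀ c ∈ (Finset.univ : Finset (Fin n × Fin k → Bool)).filter
        (fun c => ∀ j, mfun n k c j = l),
        ((∏ i : Fin n, a0 ^ (mfun n k c i) * a1 ^ (k - mfun n k c i)) *
          ∏ j : Fin n,
            ((Nat.descFactorial k (mfun n k c j + (k - mfun n k c (j - 1)))) : R)) =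
        (a0 ^ l * a1 ^ (k - l)) ^ n * ((Nat.factorial k : R)) ^ n := by
      intro c hc
      rw [Finset.mem_filter] at hc
      have hm := hc.2
      simp only [hm, Nat.add_sub_cancel' hlk, Nat.descFactorial_self]
      rw [Finset.prod_const, Finset.prod_const, Finset.card_univ, Fintype.card_fin]
    rw [Finset.sum_congr rfl hval, Finset.sum_const, card_block_pow, nsmul_eq_mul]
    push_cast
    ring
  rw [Finset.sum_congr rfl step4]
  conv_rhs => rw [Finset.mul_sum, ← Finset.sum_range_reflect]
  refine Finset.sum_congr rfl fun l hl => ?_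
  have hlk : l ≤ k := Nat.lt_succ_iff.1 (Finset.mem_range.1 hl)
  rw [show k + 1 - 1 - l = k - l from by omega, Nat.choose_symm hlk,
    Nat.sub_sub_self hlk]
  ring
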